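/- Let λ_n = (nπ/L)² and let μ_n ≥ 0 satisfy √μ_n = √λ_n − δ_α(√μ_n)/L, where δ_α is bounded with bounded derivative on (0,∞). Then δ_α(√μ_n) = δ_α(√λ_n) − δ_α'(√λ_n) δ_α(√λ_n)/L + o(1/L) as L → ∞, uniformly in n with √λ_n bounded away from 0. -/

import Mathlib

/-- The s-wave scattering phase shift of the Dirac-δ perturbation of
strength `α`, as in Definition `delta:def:phase`. -/
noncomputable def phaseShift (α k : ℝ) : ℝ :=
  if 0 < α then Real.arctan (k / (4 * Real.pi * α))
  else if α = 0 then Real.pi / 2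
  else Real.pi - Real.arctan (k / (4 * Real.pi * |α|))

private lemma key_est (f f' : ℝ → ℝ) (hf : ∀ x, HasDerivAt f (f' x) x)
    (B K₁ K₂ : ℝ) (hB : ∀ x, |f x| ≤ B) (hK1 : ∀ x, |f' x| ≤ K₁)
    (hK2 : ∀ x y, |f' x - f' y| ≤ K₂ * |x - y|)
    (L k m : ℝ) (hL : 0 < L) (hm : m = k - f m / L) :
    |f m - (f k - f' k * f k / L)| ≤ (K₁ * K₁ * B + K₂ * B * B) / L ^ 2 := by
  have hB0 : 0 ≤ B := (abs_nonneg _).trans (hB 0)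
  have hK10 : 0 ≤ K₁ := (abs_nonneg _).trans (hK1 0)
  have hK20 : 0 ≤ K₂ := by
    have := (abs_nonneg (f' 0 - f' 1)).trans (hK2 0 1)
    simpa using this
  have h1 : m - k = -(f m / L) := by linear_combination hm
  have habs : |m - k| ≤ B / L := by
    rw [h1, abs_neg, abs_div, abs_of_pos hL]
    gcongr
    exact hB m
  -- global Lipschitz bound for f
  have lip : ∀ x y : ℝ, |f x - f y| ≤ K₁ * |x - y| := by
    intro x y
    have := Convex.norm_image_sub_le_of_norm_hasDerivWithin_le
      (f := f) (f' := f') (s := (Set.univ : Set ℝ)) (C := K₁)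
      (fun z _ => (hf z).hasDerivWithinAt)
      (fun z _ => by rw [Real.norm_eq_abs]; exact hK1 z)
      convex_univ (Set.mem_univ y) (Set.mem_univ x)
    simpa [Real.norm_eq_abs] using this
  -- Taylor estimate on the segment between k and m
  have taylor : |f m - f k - f' k * (m - k)| ≤ K₂ * |m - k| * |m - k| := by
    have hks : k ∈ Set.uIcc k m := Set.left_mem_uIcc
    have hms : m ∈ Set.uIcc k m := Set.right_mem_uIcc
    have hd : ∀ x ∈ Set.uIcc k m,
        HasDerivWithinAt (fun y => f y - f' k * y) (f' x - f' k) (Set.uIcc k m) x := by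
      intro x _
      have h := (hf x).sub ((hasDerivAt_id x).const_mul (f' k))
      exact (by simpa using h.hasDerivWithinAt : HasDerivWithinAt (f - fun y => f' k * y) (f' x - f' k) (Set.uIcc k m) x)
    have hbd : ∀ x ∈ Set.uIcc k m, ‖f' x - f' k‖ ≤ K₂ * |m - k| := by
      intro x hx
      rw [Real.norm_eq_abs]
      refine (hK2 x k).trans ?_
      have hxk : |x - k| ≤ |m - k| := by
        rcases le_total k m with h | h
        · rw [Set.uIcc_of_le h] at hx
          rw [abs_of_nonneg (by linarith [hx.1]), abs_of_nonneg (by linarith)]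
          linarith [hx.2]
        · rw [Set.uIcc_of_ge h] at hx
          rw [abs_of_nonpos (by linarith [hx.2]), abs_of_nonpos (by linarith)]
          linarith [hx.1]
      exact mul_le_mul_of_nonneg_left hxk hK20
    have := Convex.norm_image_sub_le_of_norm_hasDerivWithin_le hd hbd (convex_uIcc k m) hks hms
    rw [Real.norm_eq_abs, Real.norm_eq_abs] at this
    calc |f m - f k - f' k * (m - k)|
        = |(f m - f' k * m) - (f k - f' k * k)| := by ring_nf
      _ ≤ K₂ * |m - k| * |m - k| := this
  have key_eq : f m - (f k - f' k * f k / L)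
      = (f m - f k - f' k * (m - k)) + f' k * ((f k - f m) / L) := by
    rw [h1]; ring
  rw [key_eq]
  have hterm2 : |f' k * ((f k - f m) / L)| ≤ K₁ * (K₁ * (B / L)) / L := by
    rw [abs_mul, abs_div, abs_of_pos hL]
    have h2 : |f k - f m| ≤ K₁ * (B / L) := by
      refine (lip k m).trans ?_
      have : |k - m| ≤ B / L := by rwa [abs_sub_comm]
      exact mul_le_mul_of_nonneg_left this hK10
    have hd2 : |f k - f m| / L ≤ K₁ * (B / L) / L := by gcongr
    calc |f' k| * (|f k - f m| / L) ≤ K₁ * (K₁ * (B / L) / L) := by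
          apply mul_le_mul (hK1 k) hd2 (by positivity) hK10
      _ = K₁ * (K₁ * (B / L)) / L := by ring
  have hterm1 : |f m - f k - f' k * (m - k)| ≤ K₂ * (B / L) * (B / L) := by
    refine taylor.trans ?_
    have hmk0 : 0 ≤ |m - k| := abs_nonneg _
    have hBL : 0 ≤ B / L := by positivity
    nlinarith [habs, mul_le_mul habs habs hmk0 hBL]
  calc |(f m - f k - f' k * (m - k)) + f' k * ((f k - f m) / L)|
      ≤ |f m - f k - f' k * (m - k)| + |f' k * ((f k - f m) / L)| := abs_add_le _ _
    _ ≤ K₂ * (B / L) * (B / L) + K₁ * (K₁ * (B / L)) / L := add_le_add hterm1 hterm2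
    _ = (K₁ * K₁ * B + K₂ * B * B) / L ^ 2 := by field_simp; ring

private lemma arctan_comp_deriv (c x : ℝ) :
    HasDerivAt (fun y => Real.arctan (c * y)) (c / (1 + (c * x) ^ 2)) x := by
  have h := (Real.hasDerivAt_arctan (c * x)).comp x ((hasDerivAt_id x).const_mul c)
  have e : c / (1 + (c * x) ^ 2) = 1 / (1 + (c * x) ^ 2) * (c * 1) := by ring
  rw [e]; exact h

private lemma inv_sq_lip (c a b : ℝ) :
    |c / (1 + a ^ 2) - c / (1 + b ^ 2)| ≤ |c| * |a - b| := by
  have h1 : (0:ℝ) < 1 + a ^ 2 := by positivity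
  have h2 : (0:ℝ) < 1 + b ^ 2 := by positivity
  have heq : c / (1 + a ^ 2) - c / (1 + b ^ 2)
      = c * ((b - a) * (b + a)) / ((1 + a ^ 2) * (1 + b ^ 2)) := by
    field_simp; ring
  rw [heq, abs_div, abs_mul, abs_mul, abs_of_pos (by positivity : (0:ℝ) < (1 + a^2) * (1+b^2)),
    div_le_iff₀ (by positivity)]
  have hab : |b + a| ≤ (1 + a ^ 2) * (1 + b ^ 2) := by
    rw [abs_le]
    constructor <;> nlinarith [sq_nonneg (a + 1), sq_nonneg (b + 1), sq_nonneg (a - 1),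
      sq_nonneg (b - 1), sq_nonneg (a * b), sq_nonneg (a + b), sq_nonneg (a - b)]
  have hba : |b - a| = |a - b| := abs_sub_comm b a
  rw [hba]
  calc |c| * (|a - b| * |b + a|)
      ≤ |c| * (|a - b| * ((1 + a ^ 2) * (1 + b ^ 2))) := by gcongr
    _ = |c| * |a - b| * ((1 + a ^ 2) * (1 + b ^ 2)) := by ring

/-- All analytic properties of the phase shift needed for the expansion. -/
private lemma phaseShift_props (α : ℝ) :
    ∃ f' : ℝ → ℝ, (∀ x, HasDerivAt (phaseShift α) (f' x) x) ∧
      ∃ B K₁ K₂ : ℝ, (∀ x, |phaseShift α x| ≤ B) ∧ (∀ x, |f' x| ≤ K₁) ∧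
        (∀ x y, |f' x - f' y| ≤ K₂ * |x - y|) := by
  have hπ := Real.pi_pos
  rcases lt_trichotomy α 0 with hα | hα | hα
  · -- α < 0
    set c : ℝ := (4 * Real.pi * |α|)⁻¹ with hc
    have hcpos : 0 < c := by
      have : 0 < |α| := abs_pos.mpr (ne_of_lt hα)
      positivity
    have hfe : phaseShift α = fun k => Real.pi - Real.arctan (c * k) := by
      funext k
      simp only [phaseShift, if_neg (by linarith : ¬ 0 < α), if_neg (ne_of_lt hα)]
      rw [div_eq_inv_mul, ← hc]
    refine ⟨fun x => -(c / (1 + (c * x) ^ 2)), ?_, 2 * Real.pi, |c|, |c| * |c|, ?_, ?_, ?_⟩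
    · intro x
      rw [hfe]
      exact ((arctan_comp_deriv c x).const_sub Real.pi)
    · intro x
      rw [hfe]
      have h1 := Real.arctan_lt_pi_div_two (c * x)
      have h2 := Real.neg_pi_div_two_lt_arctan (c * x)
      rw [abs_le]; constructor <;> simp only [] <;> nlinarith
    · intro x
      rw [abs_neg, abs_div, abs_of_pos (by positivity : (0:ℝ) < 1 + (c * x) ^ 2)]
      calc |c| / (1 + (c * x) ^ 2) ≤ |c| / 1 :=
            div_le_div_of_nonneg_left (abs_nonneg c) one_pos (by nlinarith [sq_nonneg (c * x)])
        _ = |c| := div_one _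
    · intro x y
      have := inv_sq_lip c (c * x) (c * y)
      have he : -(c / (1 + (c * x) ^ 2)) - -(c / (1 + (c * y) ^ 2))
          = -(c / (1 + (c * x) ^ 2) - c / (1 + (c * y) ^ 2)) := by ring
      rw [he, abs_neg]
      refine this.trans ?_
      have : |c * x - c * y| = |c| * |x - y| := by rw [← abs_mul]; ring_nf
      rw [this]; ring_nf; rfl
  · -- α = 0
    subst hα
    have hfe : phaseShift 0 = fun _ => Real.pi / 2 := by
      funext k; simp [phaseShift]
    refine ⟨fun _ => 0, ?_, 2 * Real.pi, 0, 0, ?_, ?_, ?_⟩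
    · intro x; rw [hfe]; exact hasDerivAt_const x _
    · intro x; rw [hfe]
      rw [abs_of_pos (by positivity)]
      linarith
    · intro x; simp
    · intro x y; simp
  · -- α > 0
    set c : ℝ := (4 * Real.pi * α)⁻¹ with hc
    have hcpos : 0 < c := by positivity
    have hfe : phaseShift α = fun k => Real.arctan (c * k) := by
      funext k
      simp only [phaseShift, if_pos hα]
      rw [div_eq_inv_mul, ← hc]
    refine ⟨fun x => c / (1 + (c * x) ^ 2), ?_, 2 * Real.pi, |c|, |c| * |c|, ?_, ?_, ?_⟩
    · intro x; rw [hfe]; exact arctan_comp_deriv c x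
    · intro x
      rw [hfe]
      have h1 := Real.arctan_lt_pi_div_two (c * x)
      have h2 := Real.neg_pi_div_two_lt_arctan (c * x)
      rw [abs_le]; constructor <;> simp only [] <;> nlinarith
    · intro x
      rw [abs_div, abs_of_pos (by positivity : (0:ℝ) < 1 + (c * x) ^ 2)]
      calc |c| / (1 + (c * x) ^ 2) ≤ |c| / 1 :=
            div_le_div_of_nonneg_left (abs_nonneg c) one_pos (by nlinarith [sq_nonneg (c * x)])
        _ = |c| := div_one _
    · intro x y
      have := inv_sq_lip c (c * x) (c * y)
      refine this.trans ?_
      have : |c * x - c * y| = |c| * |x - y| := by rw [← abs_mul]; ring_nf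
      rw [this]; ring_nf; rfl

/-- Expansion of the phase shift (Lemma `prod:le1` (iii)): if
`√μ_n = √λ_n − δ_α(√μ_n)/L` with `λ_n = (nπ/L)²`, then
`δ_α(√μ_n) = δ_α(√λ_n) − δ_α'(√λ_n) δ_α(√λ_n)/L + o(1/L)` as `L → ∞`,
uniformly over `n` with `√λ_n = nπ/L` bounded below by `ε > 0`. -/
theorem phaseShift_expansion (α ε : ℝ) (hε : 0 < ε) :
    ∀ η : ℝ, 0 < η → ∃ L₀ : ℝ, 0 < L₀ ∧ ∀ L : ℝ, L₀ ≤ L → ∀ n : ℕ, ∀ μ : ℝ,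
      0 ≤ μ →
      ε ≤ (n : ℝ) * Real.pi / L →
      Real.sqrt μ = (n : ℝ) * Real.pi / L - phaseShift α (Real.sqrt μ) / L →
      |phaseShift α (Real.sqrt μ) -
        (phaseShift α ((n : ℝ) * Real.pi / L) -
          deriv (phaseShift α) ((n : ℝ) * Real.pi / L) *
            phaseShift α ((n : ℝ) * Real.pi / L) / L)| ≤ η / L := by
  obtain ⟨f', hder, B, K₁, K₂, hB, hK1, hK2⟩ := phaseShift_props α
  intro η hη
  set C : ℝ := K₁ * K₁ * B + K₂ * B * B with hC
  have hC0 : 0 ≤ C := by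
    have hB0 : 0 ≤ B := (abs_nonneg _).trans (hB 0)
    have hK10 : 0 ≤ K₁ := (abs_nonneg _).trans (hK1 0)
    have hK20 : 0 ≤ K₂ := by
      have := (abs_nonneg (f' 0 - f' 1)).trans (hK2 0 1)
      simpa using this
    positivity
  refine ⟨max 1 (C / η), lt_of_lt_of_le one_pos (le_max_left _ _), ?_⟩
  intro L hL n μ hμ hεn hroot
  have hL1 : (1:ℝ) ≤ L := le_trans (le_max_left _ _) hL
  have hL0 : (0:ℝ) < L := lt_of_lt_of_le one_pos hL1
  have hLC : C / η ≤ L := le_trans (le_max_right _ _) hL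
  have hCηL : C ≤ η * L := by
    rwa [div_le_iff₀ hη, mul_comm] at hLC
  have key := key_est (phaseShift α) f' hder B K₁ K₂ hB hK1 hK2 L
    ((n : ℝ) * Real.pi / L) (Real.sqrt μ) hL0 hroot
  rw [(hder ((n : ℝ) * Real.pi / L)).deriv]
  refine key.trans ?_
  rw [div_le_div_iff₀ (by positivity) hL0]
  calc C * L ≤ (η * L) * L := by nlinarith
    _ = η * L ^ 2 := by ring
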